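/- Let n ≥ 2 be an integer and κ ∈ ℝ. Define the linear operators L and D on real polynomials by L(P) = −(1−X²)P'' + (n+1)X P' + (n−1)P and D(P) = −(1−X²)P' + X P. For any real polynomial P, set g(θ) = P(cos θ) sin θ. Then for every θ ∈ (0,π): −(sin θ)^{2−n} e^{−κ cos θ} · d/dθ( (sin θ)^{n−2} e^{κ cos θ} g'(θ) ) + (n−2)/sin²θ · g(θ) = ( L(P)(cos θ) + κ · D(P)(cos θ) ) · sin θ. -/

import Mathlib

open Polynomial Real

/-- The operator `L(P) = −(1−X²)P'' + (n+1)X P' + (n−1)P` on real polynomials. -/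
noncomputable def Lop (n : ℕ) (P : Polynomial ℝ) : Polynomial ℝ :=
  -((1 - X ^ 2) * derivative (derivative P)) + C ((n : ℝ) + 1) * X * derivative P
    + C ((n : ℝ) - 1) * P

/-- The operator `D(P) = −(1−X²)P' + X P` on real polynomials. -/
noncomputable def Dop (P : Polynomial ℝ) : Polynomial ℝ :=
  -((1 - X ^ 2) * derivative P) + X * P

lemma inner_deriv (P : Polynomial ℝ) (t : ℝ) :
    HasDerivAt (fun s : ℝ => P.eval (Real.cos s) * Real.sin s)
      (-(derivative P).eval (Real.cos t) * Real.sin t ^ 2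
        + P.eval (Real.cos t) * Real.cos t) t := by
  have h1 : HasDerivAt (fun s : ℝ => P.eval (Real.cos s))
      ((derivative P).eval (Real.cos t) * -Real.sin t) t :=
    (P.hasDerivAt (Real.cos t)).comp t (Real.hasDerivAt_cos t)
  have := h1.mul (Real.hasDerivAt_sin t)
  refine this.congr_deriv ?_
  ring

/-- For `g(θ) = P(cos θ) sin θ`, the conjugated Laplace-type operator
`−(sin θ)^{2−n} e^{−κ cos θ} (sin^{n−2}θ e^{κ cos θ} g')' + (n−2)/sin²θ · g`
equals `(L(P) + κ D(P))(cos θ) · sin θ` on `(0,π)`. -/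
theorem conjugated_operator_on_polynomials (n : ℕ) (hn : 2 ≤ n) (κ : ℝ)
    (P : Polynomial ℝ) (θ : ℝ) (hθ : θ ∈ Set.Ioo 0 π) :
    -(Real.sin θ ^ (n - 2))⁻¹ * Real.exp (-(κ * Real.cos θ)) *
        deriv (fun t : ℝ => Real.sin t ^ (n - 2) * Real.exp (κ * Real.cos t) *
          deriv (fun s : ℝ => P.eval (Real.cos s) * Real.sin s) t) θ
      + ((n : ℝ) - 2) / Real.sin θ ^ 2 * (P.eval (Real.cos θ) * Real.sin θ)
      = ((Lop n P).eval (Real.cos θ) + κ * (Dop P).eval (Real.cos θ)) * Real.sin θ := by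
  obtain ⟨m, rfl⟩ : ∃ m, n = m + 2 := ⟨n - 2, by omega⟩
  have hsin : Real.sin θ ≠ 0 :=
    ne_of_gt (Real.sin_pos_of_pos_of_lt_pi hθ.1 hθ.2)
  have hm : m + 2 - 2 = m := by omega
  rw [hm]
  -- rewrite the inner deriv as a function
  have hginner : ∀ t : ℝ, deriv (fun s : ℝ => P.eval (Real.cos s) * Real.sin s) t
      = -(derivative P).eval (Real.cos t) * Real.sin t ^ 2
        + P.eval (Real.cos t) * Real.cos t := fun t => (inner_deriv P t).deriv
  -- derivative of f1
  have hf1 : ∀ t : ℝ, HasDerivAt (fun t : ℝ =>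
      -(derivative P).eval (Real.cos t) * Real.sin t ^ 2 + P.eval (Real.cos t) * Real.cos t)
      ((derivative (derivative P)).eval (Real.cos t) * Real.sin t ^ 3
        - 3 * (derivative P).eval (Real.cos t) * Real.sin t * Real.cos t
        - P.eval (Real.cos t) * Real.sin t) t := by
    intro t
    have h1 : HasDerivAt (fun s : ℝ => (derivative P).eval (Real.cos s))
        ((derivative (derivative P)).eval (Real.cos t) * -Real.sin t) t :=
      ((derivative P).hasDerivAt (Real.cos t)).comp t (Real.hasDerivAt_cos t)
    have h2 : HasDerivAt (fun s : ℝ => P.eval (Real.cos s))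
        ((derivative P).eval (Real.cos t) * -Real.sin t) t :=
      (P.hasDerivAt (Real.cos t)).comp t (Real.hasDerivAt_cos t)
    have hs2 : HasDerivAt (fun s : ℝ => Real.sin s ^ 2)
        ((2 : ℕ) * Real.sin t ^ 1 * Real.cos t) t := (Real.hasDerivAt_sin t).pow 2
    have := (h1.neg.mul hs2).add (h2.mul (Real.hasDerivAt_cos t))
    refine this.congr_deriv ?_
    simp only [Pi.neg_apply, Pi.mul_apply]
    push_cast
    ring
  -- derivative of the full outer function
  have houter : HasDerivAt (fun t : ℝ => Real.sin t ^ m * Real.exp (κ * Real.cos t) *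
      (-(derivative P).eval (Real.cos t) * Real.sin t ^ 2 + P.eval (Real.cos t) * Real.cos t))
      ((m : ℝ) * Real.sin θ ^ (m - 1) * Real.cos θ * Real.exp (κ * Real.cos θ) *
        (-(derivative P).eval (Real.cos θ) * Real.sin θ ^ 2 + P.eval (Real.cos θ) * Real.cos θ)
       + Real.sin θ ^ m * (Real.exp (κ * Real.cos θ) * (κ * -Real.sin θ)) *
        (-(derivative P).eval (Real.cos θ) * Real.sin θ ^ 2 + P.eval (Real.cos θ) * Real.cos θ)
       + Real.sin θ ^ m * Real.exp (κ * Real.cos θ) *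
        ((derivative (derivative P)).eval (Real.cos θ) * Real.sin θ ^ 3
          - 3 * (derivative P).eval (Real.cos θ) * Real.sin θ * Real.cos θ
          - P.eval (Real.cos θ) * Real.sin θ)) θ := by
    have hp : HasDerivAt (fun t : ℝ => Real.sin t ^ m)
        ((m : ℕ) * Real.sin θ ^ (m - 1) * Real.cos θ) θ := (Real.hasDerivAt_sin θ).pow m
    have he : HasDerivAt (fun t : ℝ => Real.exp (κ * Real.cos t))
        (Real.exp (κ * Real.cos θ) * (κ * -Real.sin θ)) θ :=
      ((Real.hasDerivAt_cos θ).const_mul κ).exp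
    have := (hp.mul he).mul (hf1 θ)
    refine this.congr_deriv ?_
    simp only [Pi.neg_apply, Pi.mul_apply]
    push_cast
    ring
  have hpow : (m : ℝ) * Real.sin θ ^ (m - 1) * Real.sin θ = (m : ℝ) * Real.sin θ ^ m := by
    cases m with
    | zero => simp
    | succ k => push_cast; rw [pow_succ]; ring
  have hpow2 : (m : ℝ) * Real.sin θ ^ (m - 1) = (m : ℝ) * Real.sin θ ^ m / Real.sin θ := by
    rw [eq_div_iff hsin]; exact hpow
  simp only [hginner]
  rw [houter.deriv, hpow2]
  have hpowne : Real.sin θ ^ m ≠ 0 := pow_ne_zero _ hsin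
  have hexp : Real.exp (-(κ * Real.cos θ)) = (Real.exp (κ * Real.cos θ))⁻¹ := Real.exp_neg _
  have hexpne : Real.exp (κ * Real.cos θ) ≠ 0 := Real.exp_ne_zero _
  have hpyth : Real.sin θ ^ 2 = 1 - Real.cos θ ^ 2 := by
    have := Real.sin_sq_add_cos_sq θ; linarith
  rw [hexp]
  simp only [Lop, Dop, eval_add, eval_mul, eval_neg, eval_sub, eval_pow, eval_one, eval_X, eval_C]
  field_simp
  push_cast
  ring_nf
  linear_combination (-(1 : ℝ) *
      ((m : ℝ) * P.eval (Real.cos θ) +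
        (κ * (derivative P).eval (Real.cos θ)
          + (derivative (derivative P)).eval (Real.cos θ)) * Real.sin θ ^ 2)) * hpyth
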